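/- Consider the oligopoly pricing game with N ≥ 2 relays in which every relay has the same linear marginal cost λ_i(r) = a·r for a constant a > 0. Then: the socially optimal routing assigns R_s/N to each relay and has cost a·R_s²/(2N); and the pricing profile B_i(t) = a·R_s·t − a·t²/2 for every relay i, together with the monopolistic routing assigning all of R_s to relay 1, is an equilibrium whose cost is a·R_s²/2, i.e. exactly N times the socially optimal cost. -/

import Mathlib

open Finset MeasureTheory intervalIntegral Set

/-- Virtual-competitor cost function: the minimal total cost of splitting traffic `t`
among the relays other than `i`, given pricing functions `B`. -/
noncomputable def Bhat (N : ℕ) (B : Fin N → ℝ → ℝ) (i : Fin N) (t : ℝ) : ℝ :=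
  sInf {c : ℝ | ∃ g : Fin N → ℝ, (∀ j, 0 ≤ g j) ∧
    (∑ j ∈ Finset.univ.erase i, g j) = t ∧ c = ∑ j ∈ Finset.univ.erase i, B j (g j)}

/-- A routing of total rate `Rs` among `N` relays. -/
def IsRouting (N : ℕ) (Rs : ℝ) (f : Fin N → ℝ) : Prop :=
  (∀ i, 0 ≤ f i) ∧ (∑ i, f i) = Rs

/-- The network cost of a routing. -/
noncomputable def totalCost (N : ℕ) (lam : Fin N → ℝ → ℝ) (f : Fin N → ℝ) : ℝ :=
  ∑ i, ∫ r in (0:ℝ)..(f i), lam i r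

/-- The socially optimal routing: a routing of minimum cost. -/
def IsSociallyOptimal (N : ℕ) (Rs : ℝ) (lam : Fin N → ℝ → ℝ) (f : Fin N → ℝ) : Prop :=
  IsRouting N Rs f ∧ ∀ g, IsRouting N Rs g → totalCost N lam f ≤ totalCost N lam g

/-- An oligopoly pricing game: at least two relays, positive rate, and marginal cost
functions that are positive, continuous and strictly increasing on `[0, Rs]`. -/
def IsOligopoly (N : ℕ) (Rs : ℝ) (lam : Fin N → ℝ → ℝ) : Prop :=
  2 ≤ N ∧ 0 < Rs ∧ ∀ i,
    (∀ t ∈ Set.Icc (0:ℝ) Rs, 0 < lam i t) ∧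
    ContinuousOn (lam i) (Set.Icc 0 Rs) ∧
    StrictMonoOn (lam i) (Set.Icc 0 Rs)

/-- A pricing profile: each relay's pricing function is continuous, nondecreasing,
and vanishes at `0`. -/
def IsPricingProfile (N : ℕ) (Rs : ℝ) (B : Fin N → ℝ → ℝ) : Prop :=
  ∀ i, ContinuousOn (B i) (Set.Icc 0 Rs) ∧ MonotoneOn (B i) (Set.Icc 0 Rs) ∧ B i 0 = 0

/-- Equilibrium of the oligopoly pricing game. -/
def IsEquilibrium (N : ℕ) (Rs : ℝ) (lam B : Fin N → ℝ → ℝ) (f : Fin N → ℝ) : Prop :=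
  IsPricingProfile N Rs B ∧ IsRouting N Rs f ∧
  (∀ g, IsRouting N Rs g → (∑ i, B i (f i)) ≤ ∑ i, B i (g i)) ∧
  (∀ i, ∀ t ∈ Set.Icc (0:ℝ) Rs, Bhat N B i Rs - Bhat N B i (Rs - t) ≤ B i t) ∧
  (∀ i, B i (f i) = Bhat N B i Rs - Bhat N B i (Rs - f i)) ∧
  (∀ i, ∀ t ∈ Set.Icc (0:ℝ) Rs,
    Bhat N B i Rs - Bhat N B i (Rs - t) - (∫ r in (0:ℝ)..t, lam i r) ≤
    Bhat N B i Rs - Bhat N B i (Rs - f i) - ∫ r in (0:ℝ)..(f i), lam i r)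

/-- A function having one-sided derivatives: a right derivative at every point of
`[0, Rs)` and a left derivative at every point of `(0, Rs]`. -/
def HasOneSidedDerivs (Rs : ℝ) (F : ℝ → ℝ) : Prop :=
  (∀ t ∈ Set.Ico (0:ℝ) Rs, ∃ d, HasDerivWithinAt F d (Set.Ici t) t) ∧
  (∀ t ∈ Set.Ioc (0:ℝ) Rs, ∃ d, HasDerivWithinAt F d (Set.Iic t) t)


lemma int_lin (a x : ℝ) : (∫ r in (0:ℝ)..x, a * r) = a * x ^ 2 / 2 := by
  rw [intervalIntegral.integral_const_mul, integral_id]; ring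

lemma Bhat_linear (N : ℕ) (hN : 2 ≤ N) (Rs a : ℝ) (ha : 0 ≤ a) (i : Fin N) (t : ℝ)
    (ht : 0 ≤ t) :
    Bhat N (fun _ s => a * Rs * s - a * s ^ 2 / 2) i t = a * Rs * t - a * t ^ 2 / 2 := by
  obtain ⟨j, hj⟩ : ∃ j : Fin N, j ≠ i :=
    Fintype.exists_ne_of_one_lt_card (by rw [Fintype.card_fin]; omega) i
  have hjmem : j ∈ Finset.univ.erase i := Finset.mem_erase.2 ⟨hj, Finset.mem_univ j⟩
  have hmem : (a * Rs * t - a * t ^ 2 / 2) ∈ {c : ℝ | ∃ g : Fin N → ℝ, (∀ k, 0 ≤ g k) ∧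
      (∑ k ∈ Finset.univ.erase i, g k) = t ∧
      c = ∑ k ∈ Finset.univ.erase i, (fun _ s => a * Rs * s - a * s ^ 2 / 2) k (g k)} := by
    refine ⟨fun k => if k = j then t else 0, fun k => by positivity, ?_, ?_⟩
    · rw [Finset.sum_ite_eq' (Finset.univ.erase i) j (fun _ => t), if_pos hjmem]
    · have : ∀ k, (fun _ s => a * Rs * s - a * s ^ 2 / 2) k (if k = j then t else 0)
          = if k = j then a * Rs * t - a * t ^ 2 / 2 else 0 := by
        intro k; by_cases h : k = j <;> simp [h]
      rw [Finset.sum_congr rfl (fun k _ => this k),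
        Finset.sum_ite_eq' (Finset.univ.erase i) j (fun _ => a * Rs * t - a * t ^ 2 / 2),
        if_pos hjmem]
  have hlb : ∀ c ∈ {c : ℝ | ∃ g : Fin N → ℝ, (∀ k, 0 ≤ g k) ∧
      (∑ k ∈ Finset.univ.erase i, g k) = t ∧
      c = ∑ k ∈ Finset.univ.erase i, (fun _ s => a * Rs * s - a * s ^ 2 / 2) k (g k)},
      a * Rs * t - a * t ^ 2 / 2 ≤ c := by
    rintro c ⟨g, hg0, hgsum, rfl⟩
    have hsq : ∑ k ∈ Finset.univ.erase i, (g k) ^ 2 ≤ t ^ 2 := by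
      have := Finset.sum_sq_le_sq_sum_of_nonneg
        (s := Finset.univ.erase i) (f := g) (fun k _ => hg0 k)
      rwa [hgsum] at this
    have hrw : ∑ k ∈ Finset.univ.erase i, (a * Rs * g k - a * (g k) ^ 2 / 2)
        = a * Rs * t - a / 2 * ∑ k ∈ Finset.univ.erase i, (g k) ^ 2 := by
      rw [Finset.sum_sub_distrib, ← Finset.mul_sum, hgsum, Finset.mul_sum]
      congr 1
      exact Finset.sum_congr rfl (fun k _ => by ring)
    simp only []
    rw [hrw]
    nlinarith [mul_nonneg ha (sub_nonneg.2 hsq)]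
  exact le_antisymm (csInf_le ⟨_, hlb⟩ hmem) (le_csInf ⟨_, hmem⟩ hlb)


/-- In the symmetric oligopoly with linear marginal costs `λ_i(r) = a·r`,
the socially optimal routing splits the flow evenly with cost `a·Rs²/(2N)`, while the
pricing profile `B_i(t) = a·Rs·t − a·t²/2` together with the monopolistic routing of all
flow to relay `1` is an equilibrium of cost `a·Rs²/2 = N ·` (optimal cost). -/
theorem linear_worst_case_equilibrium
    (N : ℕ) (hN : 2 ≤ N) (Rs a : ℝ) (hRs : 0 < Rs) (ha : 0 < a) :
    (IsSociallyOptimal N Rs (fun _ r => a * r) (fun _ => Rs / N) ∧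
      totalCost N (fun _ r => a * r) (fun _ => Rs / N) = a * Rs ^ 2 / (2 * N)) ∧
    (IsEquilibrium N Rs (fun _ r => a * r) (fun _ t => a * Rs * t - a * t ^ 2 / 2)
        (fun i => if i = (⟨0, by omega⟩ : Fin N) then Rs else 0) ∧
      totalCost N (fun _ r => a * r)
        (fun i => if i = (⟨0, by omega⟩ : Fin N) then Rs else 0) = a * Rs ^ 2 / 2 ∧
      a * Rs ^ 2 / 2 = N * (a * Rs ^ 2 / (2 * N))) := by
  have hN0 : (0:ℝ) < (N:ℝ) := by positivity
  have hNne : (N:ℝ) ≠ 0 := ne_of_gt hN0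
  set i0 : Fin N := (⟨0, by omega⟩ : Fin N) with hi0
  have hsum_f : (∑ i : Fin N, (if i = i0 then Rs else 0)) = Rs := by
    rw [Finset.sum_ite_eq' Finset.univ i0 (fun _ => Rs), if_pos (Finset.mem_univ i0)]
  constructor
  · constructor
    · refine ⟨⟨fun i => by positivity, ?_⟩, ?_⟩
      · rw [Finset.sum_const, Finset.card_univ, Fintype.card_fin, nsmul_eq_mul]
        field_simp
      · intro g hg
        simp only [totalCost, int_lin]
        have hpt : ∀ i : Fin N, a * (2 * (Rs / N) * g i - (Rs / N) ^ 2) / 2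
            ≤ a * (g i) ^ 2 / 2 := by
          intro i; nlinarith [sq_nonneg (g i - Rs / N), ha.le]
        have h1 := Finset.sum_le_sum (fun i (_ : i ∈ Finset.univ) => hpt i)
        have h2 : ∑ i : Fin N, a * (2 * (Rs / N) * g i - (Rs / N) ^ 2) / 2
            = a * (Rs / N) * Rs - (N : ℝ) * (a * (Rs / N) ^ 2 / 2) := by
          have : ∀ i : Fin N, a * (2 * (Rs / N) * g i - (Rs / N) ^ 2) / 2
              = a * (Rs / N) * g i - a * (Rs / N) ^ 2 / 2 := fun i => by ring
          rw [Finset.sum_congr rfl (fun i _ => this i), Finset.sum_sub_distrib,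
            ← Finset.mul_sum, hg.2, Finset.sum_const, Finset.card_univ,
            Fintype.card_fin, nsmul_eq_mul]
        have h3 : ∑ _i : Fin N, a * (Rs / N) ^ 2 / 2 = (N : ℝ) * (a * (Rs / N) ^ 2 / 2) := by
          rw [Finset.sum_const, Finset.card_univ, Fintype.card_fin, nsmul_eq_mul]
        rw [h3]
        rw [h2] at h1
        have : (N : ℝ) * (a * (Rs / N) ^ 2 / 2) = a * (Rs / N) * Rs
            - (N : ℝ) * (a * (Rs / N) ^ 2 / 2) := by
          field_simp; ring
        linarith
    · simp only [totalCost, int_lin, Finset.sum_const, Finset.card_univ,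
        Fintype.card_fin, nsmul_eq_mul]
      field_simp
  · refine ⟨⟨?_, ?_, ?_, ?_, ?_, ?_⟩, ?_, ?_⟩
    · -- pricing profile
      intro i
      refine ⟨(Continuous.continuousOn (by continuity)), ?_, by norm_num⟩
      intro x hx y hy hxy
      simp only
      nlinarith [mul_nonneg (mul_nonneg ha.le (sub_nonneg.2 hxy))
        (by linarith [hx.2, hy.2] : (0:ℝ) ≤ 2 * Rs - x - y)]
    · -- routing
      exact ⟨fun i => by dsimp only; split <;> [exact hRs.le; exact le_refl 0], hsum_f⟩
    · -- minimality of payment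
      intro g hg
      have hL : (∑ i : Fin N, (a * Rs * (if i = i0 then Rs else 0)
          - a * (if i = i0 then Rs else 0) ^ 2 / 2)) = a * Rs * Rs - a * Rs ^ 2 / 2 := by
        have : ∀ i : Fin N, (a * Rs * (if i = i0 then Rs else 0)
            - a * (if i = i0 then Rs else 0) ^ 2 / 2)
            = if i = i0 then a * Rs * Rs - a * Rs ^ 2 / 2 else 0 := by
          intro i; by_cases h : i = i0 <;> simp [h]
        rw [Finset.sum_congr rfl (fun i _ => this i),
          Finset.sum_ite_eq' Finset.univ i0 (fun _ => a * Rs * Rs - a * Rs ^ 2 / 2),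
          if_pos (Finset.mem_univ i0)]
      simp only
      rw [hL]
      have hsq : ∑ i : Fin N, (g i) ^ 2 ≤ Rs ^ 2 := by
        have := Finset.sum_sq_le_sq_sum_of_nonneg
          (s := (Finset.univ : Finset (Fin N))) (f := g) (fun k _ => hg.1 k)
        rwa [hg.2] at this
      have hrw : ∑ i : Fin N, (a * Rs * g i - a * (g i) ^ 2 / 2)
          = a * Rs * Rs - a / 2 * ∑ i : Fin N, (g i) ^ 2 := by
        rw [Finset.sum_sub_distrib, ← Finset.mul_sum, hg.2, Finset.mul_sum]
        congr 1
        exact Finset.sum_congr rfl (fun k _ => by ring)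
      rw [hrw]
      nlinarith [mul_nonneg ha.le (sub_nonneg.2 hsq)]
    · -- condition (iv)
      intro i t ht
      rw [Bhat_linear N hN Rs a ha.le i Rs hRs.le,
        Bhat_linear N hN Rs a ha.le i (Rs - t) (by linarith [ht.2])]
      nlinarith [mul_nonneg (mul_nonneg ha.le ht.1) (sub_nonneg.2 ht.2)]
    · -- condition (v)
      intro i
      beta_reduce
      by_cases h : i = i0
      · rw [if_pos h, sub_self, Bhat_linear N hN Rs a ha.le i Rs hRs.le,
          Bhat_linear N hN Rs a ha.le i 0 le_rfl]
        ring
      · simp only [if_neg h, sub_zero]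
        rw [Bhat_linear N hN Rs a ha.le i Rs hRs.le]
        ring
    · -- condition (vi)
      intro i t ht
      rw [Bhat_linear N hN Rs a ha.le i Rs hRs.le,
        Bhat_linear N hN Rs a ha.le i (Rs - t) (by linarith [ht.2]), int_lin]
      beta_reduce
      by_cases h : i = i0
      · rw [if_pos h, sub_self, Bhat_linear N hN Rs a ha.le i 0 le_rfl, int_lin]
        nlinarith []
      · simp only [if_neg h, sub_zero]
        rw [Bhat_linear N hN Rs a ha.le i Rs hRs.le, int_lin]
        nlinarith []
    · -- cost of monopoly routing
      simp only [totalCost, int_lin]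
      have : ∀ i : Fin N, a * (if i = i0 then Rs else 0) ^ 2 / 2
          = if i = i0 then a * Rs ^ 2 / 2 else 0 := by
        intro i; by_cases h : i = i0 <;> simp [h]
      rw [Finset.sum_congr rfl (fun i _ => this i),
        Finset.sum_ite_eq' Finset.univ i0 (fun _ => a * Rs ^ 2 / 2),
        if_pos (Finset.mem_univ i0)]
    · field_simp
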